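/- Let ψ : E^g → E^r be a surjective morphism of abelian varieties of rank r given by an integer matrix. Then there exists a Gauss-reduced morphism φ : E^g → E^r (possibly after permuting coordinates) such that ker ψ ⊆ ker φ + (E^r_{Tor} × {0}^{g−r}), where E^r_{Tor} is the torsion subgroup of E^r. -/

import Mathlib

open Matrix

private lemma stmt5_exists_det_ne_zero {r g : ℕ} (ψ : Matrix (Fin r) (Fin g) ℤ)
    (hrank : ψ.rank = r) : ∃ c : Fin r → Fin g, (ψ.submatrix id c).det ≠ 0 := by
  classical
  -- cast matrix over ℚ
  set A : Matrix (Fin r) (Fin g) ℚ := ψ.map (Int.cast) with hA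
  -- step 1: find r linearly independent vectors (over ℚ) in range of A.mulVecLin
  set K := LinearMap.range ψ.mulVecLin with hK
  have hfr : Module.finrank ℤ K = r := hrank
  let b := (Module.finBasis ℤ K).reindex (finCongr hfr)
  let v : Fin r → (Fin r → ℤ) := fun k => (b k : Fin r → ℤ)
  have hv : LinearIndependent ℤ v := by
    have := b.linearIndependent.map' K.subtype K.ker_subtype
    exact this
  let L : (Fin r → ℤ) →ₗ[ℤ] (Fin r → ℚ) :=
    LinearMap.pi fun i => ((Int.castAddHom ℚ).toIntLinearMap).comp (LinearMap.proj i)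
  have hL : Function.Injective L := by
    intro x y h
    funext i
    have := congrFun h i
    simp only [L, LinearMap.pi_apply, LinearMap.comp_apply, LinearMap.proj_apply,
      AddMonoidHom.coe_toIntLinearMap, Int.coe_castAddHom] at this
    exact_mod_cast this
  have hw : LinearIndependent ℤ (L ∘ v) := hv.map' L (LinearMap.ker_eq_bot.mpr hL)
  have hwQ : LinearIndependent ℚ (L ∘ v) := (LinearIndependent.iff_fractionRing ℤ ℚ).mp hw
  -- each vector lies in the range of A.mulVecLin
  have hmem : ∀ k, L (v k) ∈ LinearMap.range A.mulVecLin := by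
    intro k
    obtain ⟨x, hx⟩ : v k ∈ K := (b k).2
    refine ⟨fun j => (x j : ℚ), ?_⟩
    funext i
    have hxi := congrFun hx i
    simp only [Matrix.mulVecLin_apply, Matrix.mulVec, dotProduct] at hxi ⊢
    simp only [hA, L, Matrix.map_apply, LinearMap.pi_apply, LinearMap.comp_apply,
      LinearMap.proj_apply, AddMonoidHom.coe_toIntLinearMap, Int.coe_castAddHom]
    rw [← hxi]
    push_cast
    rfl
  -- hence A has rank r over ℚ
  have hrA : A.rank = r := by
    refine le_antisymm (by simpa using A.rank_le_card_height) ?_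
    let w' : Fin r → ↥(LinearMap.range A.mulVecLin) := fun k => ⟨L (v k), hmem k⟩
    have hw' : LinearIndependent ℚ w' := by
      apply LinearIndependent.of_comp (LinearMap.range A.mulVecLin).subtype
      exact hwQ
    simpa [Matrix.rank] using hw'.fintype_card_le_finrank
  have hsp : Module.finrank ℚ (Submodule.span ℚ (Set.range Aᵀ)) = r := by
    exact (Matrix.rank_eq_finrank_span_cols A).symm.trans hrA
  obtain ⟨s, hs_sub, hs_span, hs_ind⟩ := exists_linearIndependent ℚ (Set.range Aᵀ)
  haveI : Fintype s := ((Set.finite_range Aᵀ).subset hs_sub).fintype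
  have hcards : Fintype.card s = r := by
    rw [← Set.toFinset_card, ← finrank_span_set_eq_card hs_ind, hs_span]; exact hsp
  let e : Fin r ≃ s := (Fintype.equivFinOfCardEq hcards).symm
  choose c hc using fun k => hs_sub (e k).2
  have hind : LinearIndependent ℚ (fun k => Aᵀ (c k)) := by
    have h1 := hs_ind.comp e e.injective
    have h2 : (fun k => Aᵀ (c k)) = (Subtype.val ∘ e) := by
      funext k; exact hc k
    rw [h2]; exact h1
  refine ⟨c, ?_⟩
  have hQ : (A.submatrix id c).det ≠ 0 := by
    intro h0
    obtain ⟨u, hu0, hu⟩ := Matrix.exists_mulVec_eq_zero_iff.mpr h0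
    have hzero : ∑ k, u k • Aᵀ (c k) = 0 := by
      funext i
      have := congrFun hu i
      simp only [Matrix.mulVec, dotProduct, Matrix.submatrix_apply, id] at this
      simp only [Finset.sum_apply, Pi.smul_apply, Pi.zero_apply, smul_eq_mul,
        Matrix.transpose_apply]
      simp only [Pi.zero_apply] at this
      rw [← this]
      exact Finset.sum_congr rfl fun k _ => mul_comm _ _
    have := Fintype.linearIndependent_iff.mp hind u hzero
    exact hu0 (funext this)
  intro h0
  apply hQ
  have : A.submatrix id c = ((ψ.submatrix id c).map (Int.cast : ℤ → ℚ)) := by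
    ext i j; simp [hA]
  rw [this,
    show ((ψ.submatrix id c).map (Int.cast : ℤ → ℚ))
        = (Int.castRingHom ℚ).mapMatrix (ψ.submatrix id c) from rfl,
    ← RingHom.map_det, h0]
  simp


private lemma stmt5_entry {r g : ℕ} [NeZero r] (ψ : Matrix (Fin r) (Fin g) ℤ)
    (c : Fin r → Fin g) (i : Fin r) (j : Fin g) :
    ((ψ.submatrix id c).adjugate * ψ) i j
      = (ψ.submatrix id (Function.update c i j)).det := by
  classical
  have h1 : ((ψ.submatrix id c).adjugate * ψ) i j
      = ((ψ.submatrix id c).adjugate *ᵥ (fun k => ψ k j)) i := by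
    simp [Matrix.mul_apply, Matrix.mulVec, dotProduct]
  rw [h1, ← Matrix.cramer_eq_adjugate_mulVec, Matrix.cramer_apply]
  congr 1
  ext k l
  by_cases h : l = i
  · subst h; simp [Matrix.updateCol_apply, Function.update_apply]
  · simp [Matrix.updateCol_apply, Function.update_apply, h]

private lemma stmt5_perm {r g : ℕ} (hrg : r ≤ g) (c : Fin r → Fin g)
    (hc : Function.Injective c) :
    ∃ σ : Equiv.Perm (Fin g), ∀ j : Fin r, σ (Fin.castLE hrg j) = c j := by
  classical
  set f : Fin g → Fin g := fun x => if h : (x : ℕ) < r then c ⟨x, h⟩ else x with hf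
  have hfs : Set.InjOn f (Finset.image (Fin.castLE hrg) Finset.univ) := by
    intro x hx y hy hxy
    simp only [Finset.coe_image, Set.mem_image] at hx hy
    obtain ⟨jx, -, rfl⟩ := hx
    obtain ⟨jy, -, rfl⟩ := hy
    have hjx : ((Fin.castLE hrg jx : Fin g) : ℕ) < r := jx.2
    have hjy : ((Fin.castLE hrg jy : Fin g) : ℕ) < r := jy.2
    simp only [hf, dif_pos hjx, dif_pos hjy] at hxy
    have := hc hxy
    have : jx = jy := by
      have := congrArg Fin.val this
      exact Fin.ext this
    rw [this]
  obtain ⟨g0, hg0⟩ := Finset.exists_equiv_extend_of_card_eq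
    (t := (Finset.univ : Finset (Fin g))) (by simp)
    (Finset.subset_univ _) hfs
  refine ⟨g0.trans (Equiv.subtypeUnivEquiv fun x => Finset.mem_univ x), fun j => ?_⟩
  have hmem : Fin.castLE hrg j ∈ Finset.image (Fin.castLE hrg) Finset.univ :=
    Finset.mem_image_of_mem _ (Finset.mem_univ j)
  have := hg0 _ hmem
  simp only [Equiv.trans_apply, Equiv.subtypeUnivEquiv_apply]
  rw [this]
  have hj : ((Fin.castLE hrg j : Fin g) : ℕ) < r := j.2
  simp only [hf, dif_pos hj]
  congr 1

theorem stmt_5 {E : Type*} [AddCommGroup E] {g r : ℕ} (hrg : r ≤ g)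
    (hdiv : ∀ (n : ℤ), n ≠ 0 → ∀ e : E, ∃ e' : E, n • e' = e)
    (ψ : Matrix (Fin r) (Fin g) ℤ)
    (hsurj : Function.Surjective fun (x : Fin g → E) (i : Fin r) => ∑ j, ψ i j • x j)
    (hrank : ψ.rank = r) :
    ∃ (a : ℤ) (φ : Matrix (Fin r) (Fin g) ℤ) (σ : Equiv.Perm (Fin g)),
      0 < a ∧
      (∀ i j : Fin r, φ i (σ (Fin.castLE hrg j)) = if i = j then a else 0) ∧
      (∀ i j, |φ i j| ≤ a) ∧
      ∀ x : Fin g → E, (∀ i, ∑ j, ψ i j • x j = 0) →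
        ∃ b t : Fin g → E, x = b + t ∧
          (∀ i, ∑ j, φ i j • b j = 0) ∧
          (∀ j, IsOfFinAddOrder (t j)) ∧
          (∀ j : Fin g, (∀ j' : Fin r, σ (Fin.castLE hrg j') ≠ j) → t j = 0) := by
  classical
  rcases Nat.eq_zero_or_pos r with hr0 | hrpos
  · subst hr0
    refine ⟨1, 0, 1, one_pos, fun i _ => i.elim0, fun i _ => i.elim0, fun x _ => ?_⟩
    exact ⟨x, 0, by simp, fun i => i.elim0, fun j => by simp, fun j _ => rfl⟩
  haveI : NeZero r := ⟨hrpos.ne'⟩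
  -- choose a column selection of maximal |det|
  obtain ⟨c₀, hc₀⟩ := stmt5_exists_det_ne_zero ψ hrank
  obtain ⟨c, -, hcmax⟩ := Finset.exists_max_image (Finset.univ : Finset (Fin r → Fin g))
    (fun c => |(ψ.submatrix id c).det|) ⟨c₀, Finset.mem_univ c₀⟩
  have hcmax' : ∀ c' : Fin r → Fin g,
      |(ψ.submatrix id c').det| ≤ |(ψ.submatrix id c).det| :=
    fun c' => hcmax c' (Finset.mem_univ c')
  set M : Matrix (Fin r) (Fin r) ℤ := ψ.submatrix id c with hM
  set a : ℤ := |M.det| with ha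
  have hapos : 0 < a := by
    have h1 : (0:ℤ) < |(ψ.submatrix id c₀).det| := abs_pos.mpr hc₀
    exact lt_of_lt_of_le h1 (hcmax' c₀)
  have hdet : M.det ≠ 0 := by
    intro h; rw [ha, h] at hapos; simp at hapos
  -- sign
  set ε : ℤ := if 0 ≤ M.det then 1 else -1 with hε
  have hεd : ε * M.det = a := by
    by_cases h : 0 ≤ M.det
    · simp [hε, ha, if_pos h, abs_of_nonneg h]
    · push_neg at h
      simp [hε, ha, if_neg (not_le.mpr h), abs_of_neg h]
  have hεabs : |ε| = 1 := by
    by_cases h : 0 ≤ M.det <;> simp [hε, h]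
  -- injectivity of c
  have hcinj : Function.Injective c := by
    intro j1 j2 h
    by_contra hne
    apply hdet
    exact Matrix.det_zero_of_column_eq hne (fun k => by simp [hM, h])
  obtain ⟨σ, hσ⟩ := stmt5_perm hrg c hcinj
  set φ : Matrix (Fin r) (Fin g) ℤ := ε • (M.adjugate * ψ) with hφ
  have hentry : ∀ i j, φ i j = ε * (ψ.submatrix id (Function.update c i j)).det := by
    intro i j
    rw [hφ]
    simp only [Matrix.smul_apply, smul_eq_mul]
    rw [stmt5_entry ψ c i j]
  refine ⟨a, φ, σ, hapos, ?_, ?_, ?_⟩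
  · intro i j
    rw [hσ j, hentry i (c j)]
    by_cases h : i = j
    · subst h
      rw [if_pos rfl, Function.update_eq_self, ← hM, hεd]
    · rw [if_neg h]
      have : (ψ.submatrix id (Function.update c i (c j))).det = 0 := by
        refine Matrix.det_zero_of_column_eq h (fun k => ?_)
        simp [Function.update_apply, Ne.symm h]
      rw [this, mul_zero]
  · intro i j
    rw [hentry i j, abs_mul, hεabs, one_mul]
    exact hcmax' _
  · intro x hx
    refine ⟨x, 0, by simp, ?_, fun j => by simp, fun j _ => rfl⟩
    intro i
    have hadj : ∑ j, ((M.adjugate * ψ) i j) • x j = 0 := by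
      have hswap : ∑ j, ((M.adjugate * ψ) i j) • x j
          = ∑ k, M.adjugate i k • ∑ j, ψ k j • x j := by
        simp_rw [Matrix.mul_apply, Finset.sum_smul, Finset.smul_sum, mul_smul]
        rw [Finset.sum_comm]
      rw [hswap]
      simp [hx]
    calc ∑ j, φ i j • x j = ε • ∑ j, ((M.adjugate * ψ) i j) • x j := by
          rw [Finset.smul_sum]
          refine Finset.sum_congr rfl fun j _ => ?_
          rw [hφ]
          simp only [Matrix.smul_apply, smul_eq_mul]
          exact mul_smul ε _ _
      _ = 0 := by rw [hadj, smul_zero]
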